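/- Let λ > 0, σ ≥ 0, θ ∈ ℝ, α⁺, α⁻ > 0, β⁺, β⁻ ≥ 0, and let u ∈ ℝ with −α⁻ < u < α⁺. For t ≥ 0 define ψ_t(u) := e^{−λt} u and φ_t(u) := (σ²u²/(4λ))(1 − e^{−2λt}) + θ u (1 − e^{−λt}) + ((β⁺+β⁻)/2) log( ((α⁺ − e^{−λt}u)(α⁻ + e^{−λt}u)) / ((α⁺ − u)(α⁻ + u)) ) + ((β⁺−β⁻)/2) log( ((α⁺ − e^{−λt}u)(α⁻ + u)) / ((α⁺ − u)(α⁻ + e^{−λt}u)) ). Then for every t ≥ 0 one has −α⁻ < ψ_t(u) < α⁺, φ_0(u) = 0, ψ_0(u) = u, and the functions are differentiable in t with (d/dt) ψ_t(u) = −λ ψ_t(u) and (d/dt) φ_t(u) = (σ²/2) ψ_t(u)² + λθ ψ_t(u) + λβ⁺ ψ_t(u)/(α⁺ − ψ_t(u)) − λβ⁻ ψ_t(u)/(α⁻ + ψ_t(u)). -/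

import Mathlib

open Real

/-- The exponent functions of the Ornstein–Uhlenbeck process with two-sided compound Poisson
jumps: with `ψ_t(u) = e^{-λt} u` and
`φ_t(u) = (σ²u²/(4λ))(1 - e^{-2λt}) + θ u (1 - e^{-λt})
  + ((β⁺+β⁻)/2) log (((α⁺ - e^{-λt}u)(α⁻ + e^{-λt}u)) / ((α⁺ - u)(α⁻ + u)))
  + ((β⁺-β⁻)/2) log (((α⁺ - e^{-λt}u)(α⁻ + u)) / ((α⁺ - u)(α⁻ + e^{-λt}u)))`,
if `-α⁻ < u < α⁺` then for every `t ≥ 0` one has `-α⁻ < ψ_t(u) < α⁺`, `φ_0(u) = 0`,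
`ψ_0(u) = u`, and the generalized Riccati equations hold:
`(d/dt) ψ_t(u) = -λ ψ_t(u)` and
`(d/dt) φ_t(u) = (σ²/2) ψ_t(u)² + λθ ψ_t(u) + λβ⁺ ψ_t(u)/(α⁺ - ψ_t(u))
  - λβ⁻ ψ_t(u)/(α⁻ + ψ_t(u))`. -/
theorem ou_jump_riccati (lam sigma theta alphaP alphaM betaP betaM : ℝ)
    (hlam : 0 < lam) (hsigma : 0 ≤ sigma) (halphaP : 0 < alphaP) (halphaM : 0 < alphaM)
    (hbetaP : 0 ≤ betaP) (hbetaM : 0 ≤ betaM)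
    (u : ℝ) (huM : -alphaM < u) (huP : u < alphaP) (ψ φ : ℝ → ℝ)
    (hψ : ∀ t, ψ t = exp (-lam * t) * u)
    (hφ : ∀ t, φ t = (sigma ^ 2 * u ^ 2 / (4 * lam)) * (1 - exp (-2 * lam * t))
      + theta * u * (1 - exp (-lam * t))
      + ((betaP + betaM) / 2) *
        log (((alphaP - exp (-lam * t) * u) * (alphaM + exp (-lam * t) * u))
          / ((alphaP - u) * (alphaM + u)))
      + ((betaP - betaM) / 2) *
        log (((alphaP - exp (-lam * t) * u) * (alphaM + u))
          / ((alphaP - u) * (alphaM + exp (-lam * t) * u)))) :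
    (∀ t, 0 ≤ t → -alphaM < ψ t ∧ ψ t < alphaP) ∧
    φ 0 = 0 ∧ ψ 0 = u ∧
    (∀ t, 0 ≤ t → HasDerivAt ψ (-lam * ψ t) t) ∧
    (∀ t, 0 ≤ t → HasDerivAt φ ((sigma ^ 2 / 2) * (ψ t) ^ 2 + lam * theta * ψ t
      + lam * betaP * ψ t / (alphaP - ψ t) - lam * betaM * ψ t / (alphaM + ψ t)) t) := by
  have hd3 : (0:ℝ) < alphaP - u := by linarith
  have hd4 : (0:ℝ) < alphaM + u := by linarith
  -- bounds on s * u
  have key : ∀ t : ℝ, 0 ≤ t → -alphaM < exp (-lam * t) * u ∧ exp (-lam * t) * u < alphaP := by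
    intro t ht
    have hs : 0 < exp (-lam * t) := exp_pos _
    have hs1 : exp (-lam * t) ≤ 1 := by
      rw [exp_le_one_iff]
      nlinarith
    constructor
    · rcases le_or_gt 0 u with h | h
      · nlinarith
      · nlinarith
    · rcases le_or_gt 0 u with h | h
      · nlinarith
      · nlinarith
  refine ⟨fun t ht => by rw [hψ]; exact key t ht, ?_, ?_, ?_, ?_⟩
  · rw [hφ, show (-lam * 0 : ℝ) = 0 by ring, show (-2 * lam * 0 : ℝ) = 0 by ring,
      Real.exp_zero, one_mul, div_self (by positivity : (alphaP - u) * (alphaM + u) ≠ 0),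
      Real.log_one]
    ring
  · rw [hψ]; simp
  · intro t ht
    have h1 : HasDerivAt (fun t : ℝ => -lam * t) (-lam) t := by
      simpa using (hasDerivAt_id t).const_mul (-lam)
    have h2 : HasDerivAt (fun t : ℝ => exp (-lam * t) * u) (exp (-lam * t) * (-lam) * u) t :=
      ((Real.hasDerivAt_exp (-lam * t)).comp t h1).mul_const u
    rw [hψ t]
    have : ψ = fun t => exp (-lam * t) * u := funext hψ
    rw [this]
    convert h2 using 1
    ring
  · intro t ht
    set s := exp (-lam * t) with hsdef
    have hs : 0 < s := exp_pos _
    obtain ⟨hM, hP⟩ := key t ht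
    have hd1 : (0:ℝ) < alphaP - s * u := by linarith
    have hd2 : (0:ℝ) < alphaM + s * u := by linarith
    have h1 : HasDerivAt (fun t : ℝ => -lam * t) (-lam) t := by
      simpa using (hasDerivAt_id t).const_mul (-lam)
    have hs' : HasDerivAt (fun t : ℝ => exp (-lam * t)) (s * (-lam)) t :=
      (Real.hasDerivAt_exp (-lam * t)).comp t h1
    have h2' : HasDerivAt (fun t : ℝ => -2 * lam * t) (-2 * lam) t := by
      simpa using (hasDerivAt_id t).const_mul (-2 * lam)
    have hs2 : HasDerivAt (fun t : ℝ => exp (-2 * lam * t)) (exp (-2 * lam * t) * (-2 * lam)) t :=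
      (Real.hasDerivAt_exp (-2 * lam * t)).comp t h2'
    have hexp2 : exp (-2 * lam * t) = s ^ 2 := by
      rw [hsdef, sq, ← Real.exp_add]; congr 1; ring
    have hA : HasDerivAt (fun t : ℝ => alphaP - exp (-lam * t) * u) (-(s * (-lam) * u)) t :=
      (hs'.mul_const u).const_sub alphaP
    have hB : HasDerivAt (fun t : ℝ => alphaM + exp (-lam * t) * u) (s * (-lam) * u) t :=
      (hs'.mul_const u).const_add alphaM
    have hT1 : HasDerivAt (fun t : ℝ => (sigma ^ 2 * u ^ 2 / (4 * lam)) * (1 - exp (-2 * lam * t)))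
        ((sigma ^ 2 * u ^ 2 / (4 * lam)) * -(exp (-2 * lam * t) * (-2 * lam))) t :=
      (hs2.const_sub 1).const_mul _
    have hT2 : HasDerivAt (fun t : ℝ => theta * u * (1 - exp (-lam * t)))
        (theta * u * -(s * (-lam))) t :=
      (hs'.const_sub 1).const_mul _
    have hN := hA.mul hB
    have hQ3 := hN.div_const ((alphaP - u) * (alphaM + u))
    have hQ3ne : ((alphaP - s * u) * (alphaM + s * u)) / ((alphaP - u) * (alphaM + u)) ≠ 0 := by
      positivity
    have hT3' := hQ3.log hQ3ne
    have hT3 := hT3'.const_mul ((betaP + betaM) / 2)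
    have hNum : HasDerivAt (fun t : ℝ => (alphaP - exp (-lam * t) * u) * (alphaM + u))
        (-(s * (-lam) * u) * (alphaM + u)) t := hA.mul_const _
    have hDen : HasDerivAt (fun t : ℝ => (alphaP - u) * (alphaM + exp (-lam * t) * u))
        ((alphaP - u) * (s * (-lam) * u)) t := hB.const_mul (alphaP - u)
    have hDenne : (alphaP - u) * (alphaM + s * u) ≠ 0 := by positivity
    have hQ4 := hNum.div hDen hDenne
    have hQ4ne : ((alphaP - s * u) * (alphaM + u)) / ((alphaP - u) * (alphaM + s * u)) ≠ 0 := by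
      positivity
    have hT4' := hQ4.log hQ4ne
    have hT4 := hT4'.const_mul ((betaP - betaM) / 2)
    have htot := ((hT1.add hT2).add hT3).add hT4
    have hφfun : φ = fun t => (sigma ^ 2 * u ^ 2 / (4 * lam)) * (1 - exp (-2 * lam * t))
      + theta * u * (1 - exp (-lam * t))
      + ((betaP + betaM) / 2) *
        log (((alphaP - exp (-lam * t) * u) * (alphaM + exp (-lam * t) * u))
          / ((alphaP - u) * (alphaM + u)))
      + ((betaP - betaM) / 2) *
        log (((alphaP - exp (-lam * t) * u) * (alphaM + u))
          / ((alphaP - u) * (alphaM + exp (-lam * t) * u))) := funext hφ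
    rw [hφfun, hψ t, ← hsdef]
    convert htot using 1
    · rfl
    · rfl
    · rfl
    rw [hexp2, ← hsdef]
    have e1 : alphaP - s * u ≠ 0 := ne_of_gt hd1
    have e2 : alphaM + s * u ≠ 0 := ne_of_gt hd2
    have e3 : alphaP - u ≠ 0 := ne_of_gt hd3
    have e4 : alphaM + u ≠ 0 := ne_of_gt hd4
    have el : lam ≠ 0 := ne_of_gt hlam
    have hX3 : (-(s * -lam * u) * (alphaM + s * u) + (alphaP - s * u) * (s * -lam * u)) /
          ((alphaP - u) * (alphaM + u)) /
          ((alphaP - s * u) * (alphaM + s * u) / ((alphaP - u) * (alphaM + u)))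
        = lam * s * u / (alphaP - s * u) - lam * s * u / (alphaM + s * u) := by
      field_simp
      ring
    have hX4 : (-(s * -lam * u) * (alphaM + u) * ((alphaP - u) * (alphaM + s * u)) -
            (alphaP - s * u) * (alphaM + u) * ((alphaP - u) * (s * -lam * u))) /
          ((alphaP - u) * (alphaM + s * u)) ^ 2 /
          ((alphaP - s * u) * (alphaM + u) / ((alphaP - u) * (alphaM + s * u)))
        = lam * s * u / (alphaP - s * u) + lam * s * u / (alphaM + s * u) := by
      field_simp
      ring
    simp only [Pi.mul_apply, Pi.div_apply, ← hsdef]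
    rw [hX3, hX4]
    field_simp
    ring
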